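/- There exist sets A, B ⊆ ℕ such that B is mod-finite reducible to A but B is not mod-recursive reducible to A. -/

import Mathlib

open Filter

/-- A finite record of oracle query answers: a finite list of (position, bit) pairs. -/
abbrev FinInfo : Type := List (ℕ × Bool)

/-- Two finite query-answer records are compatible if they agree wherever both answer. -/
def FinInfo.Compatible (σ τ : FinInfo) : Prop :=
  ∀ p ∈ σ, ∀ q ∈ τ, p.1 = q.1 → p.2 = q.2

/-- The answers recorded in `σ` are exactly those given by the characteristic
function of the set `C`. -/
def AgreesSet (σ : FinInfo) (C : Set ℕ) : Prop :=
  ∀ p ∈ σ, (p.2 = true ↔ p.1 ∈ C)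

/-- The answers recorded in `σ` are all given by the partial oracle `g`. -/
def AgreesPart (σ : FinInfo) (g : ℕ →. Bool) : Prop :=
  ∀ p ∈ σ, p.2 ∈ g p.1

/-- `g` is a partial oracle for the set `A`: a partial function from `ℕ` to `Bool`
agreeing with the characteristic function of `A` on its domain. -/
def IsPartialOracle (g : ℕ →. Bool) (A : Set ℕ) : Prop :=
  ∀ n b, b ∈ g n → (b = true ↔ n ∈ A)

/-- The domain of a partial oracle. -/
def pDom (g : ℕ →. Bool) : Set ℕ := {n | (g n).Dom}

/-- A Turing functional (oracle Turing machine program), presented as a computable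
enumeration of axioms `(σ, n, b)`, meaning: if the oracle answers the queries
recorded in `σ` as `σ` prescribes, then the machine halts on input `n` with
output `b`.  Oracle queries are made in parallel, so with a partial oracle the
machine halts on `n` iff some axiom for `n` is answered by the partial oracle.
Determinism of the machine is reflected in the requirement that axioms with
compatible query answers give equal outputs. -/
structure TuringFunctional where
  axs : ℕ → Option (FinInfo × ℕ × Bool)
  axs_computable : Computable axs
  consistent : ∀ k₁ k₂ σ₁ σ₂ n b₁ b₂, axs k₁ = some (σ₁, n, b₁) →
    axs k₂ = some (σ₂, n, b₂) → σ₁.Compatible σ₂ → b₁ = b₂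

namespace TuringFunctional

/-- `Φ^C(n)` halts with output `b` (total oracle `C`). -/
def HaltsT (Φ : TuringFunctional) (C : Set ℕ) (n : ℕ) (b : Bool) : Prop :=
  ∃ k σ, Φ.axs k = some (σ, n, b) ∧ AgreesSet σ C

/-- `Φ^g(n)` halts with output `b` (partial oracle `g`). -/
def HaltsP (Φ : TuringFunctional) (g : ℕ →. Bool) (n : ℕ) (b : Bool) : Prop :=
  ∃ k σ, Φ.axs k = some (σ, n, b) ∧ AgreesPart σ g

/-- `Φ^C` is total. -/
def TotalOn (Φ : TuringFunctional) (C : Set ℕ) : Prop := ∀ n, ∃ b, Φ.HaltsT C n b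

/-- The set `{n : Φ^C(n) = B(n)}` on which `Φ^C` halts and agrees with the
characteristic function of `B`. -/
def AgreeSet (Φ : TuringFunctional) (C B : Set ℕ) : Set ℕ :=
  {n | ∃ b, Φ.HaltsT C n b ∧ (b = true ↔ n ∈ B)}

/-- `Φ^A = B`: with oracle `A`, `Φ` is total and computes the characteristic
function of `B`. -/
def FunEq (Φ : TuringFunctional) (A B : Set ℕ) : Prop :=
  Φ.TotalOn A ∧ ∀ n b, Φ.HaltsT A n b → (b = true ↔ n ∈ B)

/-- `Φ^g ≃ B`: every halting output of `Φ` with partial oracle `g` agrees with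
the characteristic function of `B`. -/
def PAgrees (Φ : TuringFunctional) (g : ℕ →. Bool) (B : Set ℕ) : Prop :=
  ∀ n b, Φ.HaltsP g n b → (b = true ↔ n ∈ B)

/-- The domain of `Φ^g`. -/
def PDomain (Φ : TuringFunctional) (g : ℕ →. Bool) : Set ℕ :=
  {n | ∃ b, Φ.HaltsP g n b}

/-- The axiom with index `k` applies to oracle `C` on input `n`. -/
def AppliesAt (Φ : TuringFunctional) (C : Set ℕ) (n k : ℕ) : Prop :=
  ∃ σ b, Φ.axs k = some (σ, n, b) ∧ AgreesSet σ C

/-- The (halting) computation of `Φ^C(n)` queries the oracle bit `C(m)`: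
the first axiom in the enumeration that applies to `C` on input `n`
records an answer to a query at position `m`. -/
def QueriesAt (Φ : TuringFunctional) (C : Set ℕ) (n m : ℕ) : Prop :=
  ∃ k σ b, Φ.axs k = some (σ, n, b) ∧ AgreesSet σ C ∧
    (∀ k' < k, ¬ Φ.AppliesAt C n k') ∧ ∃ p ∈ σ, p.1 = m

end TuringFunctional

/-- `D ⊆ ℕ` has (asymptotic) density 1. -/
def DensityOne (D : Set ℕ) : Prop :=
  Filter.Tendsto (fun n : ℕ => ((D ∩ Set.Iio n).ncard : ℝ) / n) Filter.atTop (nhds 1)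

/-- `B ≤₁ A`: 1-reducibility. -/
def OneRed (B A : Set ℕ) : Prop :=
  ∃ f : ℕ → ℕ, Computable f ∧ Function.Injective f ∧ ∀ n, n ∈ B ↔ f n ∈ A

/-- `B ≤_T A`: Turing reducibility. -/
def TuringRed (B A : Set ℕ) : Prop :=
  ∃ Φ : TuringFunctional, Φ.FunEq A B

/-- `B ≤_mr A`: mod-recursive reducibility. -/
def ModRecRed (B A : Set ℕ) : Prop :=
  ∃ Φ : TuringFunctional, Φ.FunEq A B ∧
    ∀ C : Set ℕ, ComputablePred (fun n => (n ∈ C ↔ n ∈ A)) →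
      Φ.TotalOn C ∧ ComputablePred (fun n => n ∈ Φ.AgreeSet C B)

/-- `B ≤_mf A`: mod-finite reducibility. -/
def ModFinRed (B A : Set ℕ) : Prop :=
  ∃ Φ : TuringFunctional, Φ.FunEq A B ∧
    ∀ C : Set ℕ, {n | ¬ (n ∈ C ↔ n ∈ A)}.Finite →
      Φ.TotalOn C ∧ (Φ.AgreeSet C B)ᶜ.Finite

/-- `B ≤_cor A`: coarse reducibility. -/
def CoarseRed (B A : Set ℕ) : Prop :=
  ∃ Φ : TuringFunctional,
    ∀ C : Set ℕ, DensityOne {n | n ∈ C ↔ n ∈ A} →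
      Φ.TotalOn C ∧ DensityOne (Φ.AgreeSet C B)

/-- `B ≤_cf A`: cofinite reducibility. -/
def CofinRed (B A : Set ℕ) : Prop :=
  ∃ Φ : TuringFunctional, Φ.FunEq A B ∧
    ∀ g : ℕ →. Bool, IsPartialOracle g A → (pDom g)ᶜ.Finite →
      Φ.PAgrees g B ∧ (Φ.PDomain g)ᶜ.Finite

/-- `B ≤_g A`: generic reducibility. -/
def GenericRed (B A : Set ℕ) : Prop :=
  ∃ Φ : TuringFunctional, Φ.FunEq A B ∧
    ∀ g : ℕ →. Bool, IsPartialOracle g A → DensityOne (pDom g) →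
      Φ.PAgrees g B ∧ DensityOne (Φ.PDomain g)

/-- `B ≤_ii A`: infinite-information reducibility. -/
def IIRed (B A : Set ℕ) : Prop :=
  ∃ Φ : TuringFunctional,
    ∀ g : ℕ →. Bool, IsPartialOracle g A → (pDom g).Infinite →
      Φ.PAgrees g B ∧ (Φ.PDomain g).Infinite

/-- `B ≤_ubfb A`: use-bounded-from-below reducibility. -/
def UbfbRed (B A : Set ℕ) : Prop :=
  ∃ Φ : TuringFunctional, Φ.FunEq A B ∧
    ∀ m : ℕ, ∀ᶠ n in Filter.atTop, ¬ Φ.QueriesAt A n m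

/-- `R(S) = {2^n · m : n ∈ S, m odd}`. -/
def Rmap (S : Set ℕ) : Set ℕ :=
  {x | ∃ n ∈ S, ∃ m : ℕ, Odd m ∧ x = 2 ^ n * m}

/-- `R̃(S) = {2^n + m : n ∈ S, m < 2^n}`. -/
def Rtilde (S : Set ℕ) : Set ℕ :=
  {x | ∃ n ∈ S, ∃ m : ℕ, m < 2 ^ n ∧ x = 2 ^ n + m}

/-- The Turing join `A ⊕ B`. -/
def turingJoin (A B : Set ℕ) : Set ℕ :=
  {x | (∃ n ∈ A, x = 2 * n) ∨ (∃ n ∈ B, x = 2 * n + 1)}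

namespace MFMR

open Topology Filter Set

abbrev XS : Type := ℕ → Bool

/-- The coded set: `B(n)` is the payload bit selected by the selector bit `χ(3n)`. -/
def Bfun (χ : XS) (n : ℕ) : Bool := cond (χ (3*n)) (χ (3*n+1)) (χ (3*n+2))

def Aset (χ : XS) : Set ℕ := {n | χ n = true}

def Bset (χ : XS) : Set ℕ := {n | Bfun χ n = true}

/-- Halting of a raw axiom enumeration on a set oracle. -/
def HaltsF (f : ℕ → Option (FinInfo × ℕ × Bool)) (C : Set ℕ) (n : ℕ) (b : Bool) : Prop :=
  ∃ k σ, f k = some (σ, n, b) ∧ AgreesSet σ C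

/-- `f` totally and correctly computes `Bfun χ` from oracle `Aset χ`. -/
def Vset (f : ℕ → Option (FinInfo × ℕ × Bool)) : Set XS :=
  {χ | (∀ n, ∃ b, HaltsF f (Aset χ) n b) ∧ ∀ n b, HaltsF f (Aset χ) n b → b = Bfun χ n}

/-- Flip all selector bits from block `k` on. -/
def flipSel (k : ℕ) (χ : XS) : XS := fun m => if m % 3 = 0 ∧ k ≤ m / 3 then !(χ m) else χ m

/-- The agreement set of `f` on the flipped oracle, against `Bset χ`. -/
def Ep (f : ℕ → Option (FinInfo × ℕ × Bool)) (χ : XS) (k : ℕ) (n : ℕ) : Prop :=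
  ∃ b, HaltsF f (Aset (flipSel k χ)) n b ∧ (b = true ↔ n ∈ Bset χ)

/-- The set of oracles `χ` for which `f` is a mod-recursive witness (weak form). -/
def badSet (f : ℕ → Option (FinInfo × ℕ × Bool)) : Set XS :=
  {χ | χ ∈ Vset f ∧ ∀ k, ComputablePred (Ep f χ k)}

/-! ### Topology basics -/

lemma bool_iff_eq {a b : Bool} : (a = true ↔ b = true) ↔ b = a := by
  cases a <;> cases b <;> simp

lemma isClopen_coord (m : ℕ) (c : Bool) : IsClopen {χ : XS | χ m = c} :=
  (isClopen_discrete ({c} : Set Bool)).preimage (continuous_apply m)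

lemma isClopen_agrees (σ : FinInfo) : IsClopen {χ : XS | AgreesSet σ (Aset χ)} := by
  induction σ with
  | nil =>
      have : {χ : XS | AgreesSet [] (Aset χ)} = Set.univ := by
        ext χ; simp [AgreesSet]
      rw [this]; exact isClopen_univ
  | cons p t ih =>
      have : {χ : XS | AgreesSet (p :: t) (Aset χ)}
          = {χ : XS | χ p.1 = p.2} ∩ {χ : XS | AgreesSet t (Aset χ)} := by
        ext χ
        simp only [AgreesSet, List.forall_mem_cons, Set.mem_inter_iff, Set.mem_setOf_eq]
        constructor
        · rintro ⟨h1, h2⟩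
          exact ⟨bool_iff_eq.mp h1, h2⟩
        · rintro ⟨h1, h2⟩
          exact ⟨bool_iff_eq.mpr h1, h2⟩
      rw [this]; exact (isClopen_coord _ _).inter ih

lemma isClopen_bfun (n : ℕ) (b : Bool) : IsClopen {χ : XS | Bfun χ n = b} := by
  have : {χ : XS | Bfun χ n = b}
      = ({χ : XS | χ (3*n) = true} ∩ {χ : XS | χ (3*n+1) = b})
        ∪ ({χ : XS | χ (3*n) = false} ∩ {χ : XS | χ (3*n+2) = b}) := by
    ext χ
    cases h : χ (3*n) <;> simp [Bfun, h]
  rw [this]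
  exact (((isClopen_coord _ _).inter (isClopen_coord _ _)).union
    ((isClopen_coord _ _).inter (isClopen_coord _ _)))

lemma isOpen_axiom (o : Option (FinInfo × ℕ × Bool)) (n : ℕ) :
    IsOpen {χ : XS | ∃ σ b, o = some (σ, n, b) ∧ AgreesSet σ (Aset χ)} := by
  rcases o with _ | ⟨⟨σ, n', b⟩⟩
  · have : {χ : XS | ∃ σ b, (none : Option (FinInfo × ℕ × Bool)) = some (σ, n, b)
        ∧ AgreesSet σ (Aset χ)} = ∅ := by ext χ; simp
    rw [this]; exact isOpen_empty
  · by_cases hn : n' = n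
    · subst hn
      have : {χ : XS | ∃ σ' b', (some (σ, n', b) : Option (FinInfo × ℕ × Bool)) = some (σ', n', b')
          ∧ AgreesSet σ' (Aset χ)} = {χ : XS | AgreesSet σ (Aset χ)} := by
        ext χ
        simp only [Option.some.injEq, Prod.mk.injEq, Set.mem_setOf_eq]
        constructor
        · rintro ⟨σ', b', ⟨rfl, -, rfl⟩, h2⟩; exact h2
        · intro h; exact ⟨σ, b, by simp, h⟩
      rw [this]; exact (isClopen_agrees σ).isOpen
    · have : {χ : XS | ∃ σ' b', (some (σ, n', b) : Option (FinInfo × ℕ × Bool)) = some (σ', n, b')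
          ∧ AgreesSet σ' (Aset χ)} = ∅ := by
        ext χ
        simp only [Option.some.injEq, Prod.mk.injEq, Set.mem_setOf_eq, Set.mem_empty_iff_false,
          iff_false]
        rintro ⟨σ', b', ⟨-, h, -⟩, -⟩
        exact hn h
      rw [this]; exact isOpen_empty

lemma isOpen_halts (f : ℕ → Option (FinInfo × ℕ × Bool)) (n : ℕ) :
    IsOpen {χ : XS | ∃ b, HaltsF f (Aset χ) n b} := by
  have : {χ : XS | ∃ b, HaltsF f (Aset χ) n b}
      = ⋃ k, {χ : XS | ∃ σ b, f k = some (σ, n, b) ∧ AgreesSet σ (Aset χ)} := by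
    ext χ
    simp only [Set.mem_setOf_eq, Set.mem_iUnion, HaltsF]
    constructor
    · rintro ⟨b, k, σ, h1, h2⟩; exact ⟨k, σ, b, h1, h2⟩
    · rintro ⟨k, σ, b, h1, h2⟩; exact ⟨b, k, σ, h1, h2⟩
  rw [this]
  exact isOpen_iUnion fun k => isOpen_axiom (f k) n

lemma isClosed_axiom (o : Option (FinInfo × ℕ × Bool)) :
    IsClosed {χ : XS | ∀ σ n b, o = some (σ, n, b) → AgreesSet σ (Aset χ) → b = Bfun χ n} := by
  rcases o with _ | ⟨⟨σ, n, b⟩⟩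
  · have : {χ : XS | ∀ σ n b, (none : Option (FinInfo × ℕ × Bool)) = some (σ, n, b)
        → AgreesSet σ (Aset χ) → b = Bfun χ n} = Set.univ := by ext χ; simp
    rw [this]; exact isClosed_univ
  · have : {χ : XS | ∀ σ' n' b', (some (σ, n, b) : Option (FinInfo × ℕ × Bool)) = some (σ', n', b')
        → AgreesSet σ' (Aset χ) → b' = Bfun χ n'}
        = {χ : XS | AgreesSet σ (Aset χ)}ᶜ ∪ {χ : XS | Bfun χ n = b} := by
      ext χ
      simp only [Option.some.injEq, Prod.mk.injEq, Set.mem_setOf_eq, Set.mem_union,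
        Set.mem_compl_iff]
      constructor
      · intro h
        by_cases hA : AgreesSet σ (Aset χ)
        · right; exact (h σ n b ⟨rfl, rfl, rfl⟩ hA).symm
        · left; exact hA
      · rintro (h | h) σ' n' b' ⟨rfl, rfl, rfl⟩ h2
        · exact absurd h2 h
        · exact h.symm
    rw [this]
    exact ((isClopen_agrees σ).isOpen.isClosed_compl).union (isClopen_bfun n b).isClosed

lemma isClosed_corr (f : ℕ → Option (FinInfo × ℕ × Bool)) :
    IsClosed {χ : XS | ∀ n b, HaltsF f (Aset χ) n b → b = Bfun χ n} := by
  have : {χ : XS | ∀ n b, HaltsF f (Aset χ) n b → b = Bfun χ n}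
      = ⋂ k, {χ : XS | ∀ σ n b, f k = some (σ, n, b) → AgreesSet σ (Aset χ) → b = Bfun χ n} := by
    ext χ
    simp only [Set.mem_setOf_eq, Set.mem_iInter]
    constructor
    · intro h k σ n b h1 h2; exact h n b ⟨k, σ, h1, h2⟩
    · rintro h n b ⟨k, σ, h1, h2⟩; exact h k σ n b h1 h2
  rw [this]
  exact isClosed_iInter fun k => isClosed_axiom (f k)

lemma bms_Vset (f : ℕ → Option (FinInfo × ℕ × Bool)) : BaireMeasurableSet (Vset f) := by
  have : Vset f = (⋂ n, {χ : XS | ∃ b, HaltsF f (Aset χ) n b})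
      ∩ {χ : XS | ∀ n b, HaltsF f (Aset χ) n b → b = Bfun χ n} := by
    ext χ
    simp only [Vset, Set.mem_inter_iff, Set.mem_iInter, Set.mem_setOf_eq]
  rw [this]
  exact (BaireMeasurableSet.iInter fun n => (isOpen_halts f n).baireMeasurableSet).inter
    ((isClosed_corr f).isOpen_compl.baireMeasurableSet.of_compl)

/-! ### Cylinders -/

def cylPre (χ : XS) (m : ℕ) : Set XS := {χ' | ∀ i, i < m → χ' i = χ i}

def cylL (l : List Bool) : Set XS := {χ | ∀ i, i < l.length → χ i = l.getD i false}

lemma cylL_prefix (χ : XS) (m : ℕ) : cylL ((List.range m).map χ) = cylPre χ m := by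
  have hlen : ((List.range m).map χ).length = m := by simp
  have hget : ∀ i, i < m → ((List.range m).map χ).getD i false = χ i := by
    intro i hi
    rw [List.getD_eq_getElem?_getD, List.getElem?_map, List.getElem?_range hi]
    rfl
  ext χ'
  constructor
  · intro h i hi
    have := h i (by rw [hlen]; exact hi)
    rwa [hget i hi] at this
  · intro h i hi
    rw [hlen] at hi
    rw [hget i hi]
    exact h i hi

lemma exists_cylPre_subset {U : Set XS} (hU : IsOpen U) {χ : XS} (hχ : χ ∈ U) :
    ∃ m, cylPre χ m ⊆ U := by
  obtain ⟨I, u, h1, h2⟩ := isOpen_pi_iff.mp hU χ hχ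
  refine ⟨(I.sup id) + 1, fun χ' hχ' => h2 ?_⟩
  intro a ha
  have haI : a ≤ I.sup id := Finset.le_sup (f := id) ha
  rw [hχ' a (by omega)]
  exact (h1 a ha).2

/-! ### Meagerness helpers -/

lemma isMeagre_iUnion' {ι : Type*} [Countable ι] {s : ι → Set XS} (h : ∀ i, IsMeagre (s i)) :
    IsMeagre (⋃ i, s i) := by
  rw [IsMeagre, Set.compl_iUnion]
  exact countable_iInter_mem.mpr h

lemma isMeagre_union {s t : Set XS} (hs : IsMeagre s) (ht : IsMeagre t) : IsMeagre (s ∪ t) := by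
  rw [IsMeagre, Set.compl_union]
  exact Filter.inter_mem hs ht

lemma meager_of_closed_ext {S : Set XS} (hcl : IsClosed S)
    (h : ∀ χ m, ∃ χ', χ' ∈ cylPre χ m ∧ χ' ∉ S) : IsMeagre S := by
  rw [IsMeagre]
  refine residual_of_dense_open hcl.isOpen_compl ?_
  rw [dense_iff_inter_open]
  rintro U hU ⟨χ, hχ⟩
  obtain ⟨m, hm⟩ := exists_cylPre_subset hU hχ
  obtain ⟨χ', h1, h2⟩ := h χ m
  exact ⟨χ', hm h1, h2⟩

/-! ### The selector flip -/

lemma flipSel_invol (k : ℕ) : Function.Involutive (flipSel k) := by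
  intro χ; funext m
  by_cases h : m % 3 = 0 ∧ k ≤ m / 3 <;> simp [flipSel, h]

lemma continuous_flipSel (k : ℕ) : Continuous (flipSel k) := by
  refine continuous_pi fun m => ?_
  by_cases h : m % 3 = 0 ∧ k ≤ m / 3
  · simp only [flipSel, if_pos h]
    exact (continuous_of_discreteTopology (f := Bool.not)).comp (continuous_apply m)
  · simp only [flipSel, if_neg h]
    exact continuous_apply m

def flipHomeo (k : ℕ) : XS ≃ₜ XS :=
  { toEquiv := (flipSel_invol k).toPerm
    continuous_toFun := continuous_flipSel k
    continuous_invFun := continuous_flipSel k }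

lemma isMeagre_preimage_flip (k : ℕ) {M : Set XS} (hM : IsMeagre M) :
    IsMeagre (flipSel k ⁻¹' M) := by
  rw [IsMeagre] at hM ⊢
  obtain ⟨S, hopen, hdense, hcnt, hsub⟩ := mem_residual_iff.mp hM
  refine mem_residual_iff.mpr ⟨(fun t => flipSel k ⁻¹' t) '' S, ?_, ?_, hcnt.image _, ?_⟩
  · rintro t ⟨t', ht', rfl⟩
    exact (hopen t' ht').preimage (continuous_flipSel k)
  · rintro t ⟨t', ht', rfl⟩
    show Dense (flipSel k ⁻¹' t')
    have : flipSel k ⁻¹' t' = (flipHomeo k) ⁻¹' t' := rfl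
    rw [dense_iff_closure_eq, this, ← Homeomorph.preimage_closure,
      (dense_iff_closure_eq.mp (hdense t' ht'))]
    rfl
  · intro χ hχ
    have : flipSel k χ ∈ ⋂₀ S := by
      intro t ht
      exact hχ (flipSel k ⁻¹' t) ⟨t, ht, rfl⟩
    exact hsub this

/-! ### The coin-flip bad sets -/

def Sbad (p : ℕ → Prop) (j : ℕ) : Set XS :=
  {χ | ∀ n, j ≤ n → ((χ (3*n+1) == χ (3*n+2)) = true ↔ p n)}

lemma isClopen_beq (a b : ℕ) (c : Bool) : IsClopen {χ : XS | (χ a == χ b) = c} := by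
  have : {χ : XS | (χ a == χ b) = c}
      = ({χ : XS | χ a = true} ∩ {χ : XS | χ b = c})
        ∪ ({χ : XS | χ a = false} ∩ {χ : XS | χ b = !c}) := by
    ext χ
    cases h : χ a <;> cases hb : χ b <;> cases c <;> simp [h, hb]
  rw [this]
  exact (((isClopen_coord _ _).inter (isClopen_coord _ _)).union
    ((isClopen_coord _ _).inter (isClopen_coord _ _)))

lemma meager_Sbad (p : ℕ → Prop) (j : ℕ) : IsMeagre (Sbad p j) := by
  refine meager_of_closed_ext ?_ ?_
  · have : Sbad p j = ⋂ n, ⋂ (_ : j ≤ n), {χ : XS | ((χ (3*n+1) == χ (3*n+2)) = true ↔ p n)} := by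
      ext χ; simp [Sbad]
    rw [this]
    refine isClosed_iInter fun n => isClosed_iInter fun _ => ?_
    by_cases hp : p n
    · have : {χ : XS | ((χ (3*n+1) == χ (3*n+2)) = true ↔ p n)}
          = {χ : XS | (χ (3*n+1) == χ (3*n+2)) = true} := by
        ext χ; simp [hp]
      rw [this]; exact (isClopen_beq _ _ _).isClosed
    · have : {χ : XS | ((χ (3*n+1) == χ (3*n+2)) = true ↔ p n)}
          = {χ : XS | (χ (3*n+1) == χ (3*n+2)) = false} := by
        ext χ
        simp only [Set.mem_setOf_eq, iff_iff_implies_and_implies]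
        constructor
        · rintro ⟨h1, -⟩
          cases hb : (χ (3*n+1) == χ (3*n+2))
          · rfl
          · exact absurd (h1 hb) hp
        · intro h
          rw [h]
          exact ⟨fun h' => absurd h' (by simp), fun h' => absurd h' hp⟩
      rw [this]; exact (isClopen_beq _ _ _).isClosed
  · intro χ m
    classical
    set n := max m j with hn
    by_cases hp : p n
    · refine ⟨fun i => if i = 3*n+1 then true else if i = 3*n+2 then false else χ i, ?_, ?_⟩
      · intro i hi
        have h1 : i ≠ 3*n+1 := by omega
        have h2 : i ≠ 3*n+2 := by omega
        simp [h1, h2]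
      · intro hS
        have := hS n (le_max_right m j)
        have e2 : (3*n+2 : ℕ) ≠ 3*n+1 := by omega
        simp [e2] at this
        exact this hp
    · refine ⟨fun i => if i = 3*n+1 then true else if i = 3*n+2 then true else χ i, ?_, ?_⟩
      · intro i hi
        have h1 : i ≠ 3*n+1 := by omega
        have h2 : i ≠ 3*n+2 := by omega
        simp [h1, h2]
      · intro hS
        have := hS n (le_max_right m j)
        have e2 : (3*n+2 : ℕ) ≠ 3*n+1 := by omega
        simp [e2] at this
        exact hp this

def CompPreds : Set (ℕ → Prop) := {p | ComputablePred p}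

def Zbad : Set XS := ⋃ p ∈ CompPreds, ⋃ j, Sbad p j


/-! ### Countability of computable objects -/

lemma exists_code_of_computable {σ : Type*} [Primcodable σ] {g : ℕ → σ} (hg : Computable g) :
    ∃ c : Nat.Partrec.Code, ∀ n, c.eval n = Part.some (Encodable.encode (g n)) := by
  have h1 : Computable fun n => Encodable.encode (g n) :=
    Computable.encode.comp hg
  have h2 : Nat.Partrec fun n => Part.some (Encodable.encode (g n)) :=
    Partrec.nat_iff.mp h1
  obtain ⟨c, hc⟩ := Nat.Partrec.Code.exists_code.mp h2
  exact ⟨c, fun n => by rw [hc]⟩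

lemma countable_CompPreds : CompPreds.Countable := by
  have hsub : CompPreds ⊆ Set.range
      (fun c : Nat.Partrec.Code => fun n => (Encodable.encode true) ∈ c.eval n) := by
    intro p hp
    obtain ⟨g, hg, rfl⟩ := ComputablePred.computable_iff.mp hp
    obtain ⟨c, hc⟩ := exists_code_of_computable hg
    refine ⟨c, ?_⟩
    funext n
    show (Encodable.encode true ∈ c.eval n) = (g n = true)
    rw [hc n]
    apply propext
    rw [Part.mem_some_iff]
    exact ⟨fun h => (Encodable.encode_injective h.symm), fun h => by rw [h]⟩
  exact (Set.countable_range _).mono hsub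

def CompFuns : Set (ℕ → Option (FinInfo × ℕ × Bool)) := {f | Computable f}

open scoped Classical in
noncomputable def decodeFun (c : Nat.Partrec.Code) : ℕ → Option (FinInfo × ℕ × Bool) :=
  fun n =>
    if h : (c.eval n).Dom then
      ((Encodable.decode ((c.eval n).get h) : Option (Option (FinInfo × ℕ × Bool))).getD none)
    else none

lemma countable_CompFuns : CompFuns.Countable := by
  have hsub : CompFuns ⊆ Set.range decodeFun := by
    intro f hf
    obtain ⟨c, hc⟩ := exists_code_of_computable hf
    refine ⟨c, ?_⟩
    funext n
    have hdom : (c.eval n).Dom := by rw [hc n]; trivial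
    have hget : (c.eval n).get hdom = Encodable.encode (f n) := by
      have := hc n
      exact Part.get_eq_of_mem (by rw [this]; exact Part.mem_some _) hdom
    show decodeFun c n = f n
    rw [decodeFun]
    rw [dif_pos hdom, hget, Encodable.encodek]
    rfl
  exact (Set.countable_range _).mono hsub

lemma meager_Zbad : IsMeagre Zbad := by
  have : Zbad = ⋃ p : CompPreds, ⋃ j, Sbad p j := by
    rw [Zbad, Set.biUnion_eq_iUnion]
  rw [this]
  haveI : Countable CompPreds := countable_CompPreds.to_subtype
  exact isMeagre_iUnion' fun p => isMeagre_iUnion' fun j => meager_Sbad p j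

/-! ### The main meagerness lemma -/

theorem meager_badSet (f : ℕ → Option (FinInfo × ℕ × Bool)) : IsMeagre (badSet f) := by
  classical
  obtain ⟨U, hUo, hUeq⟩ := (bms_Vset f).residualEq_isOpen
  set M : Set XS := {χ | ¬ ((χ ∈ Vset f) ↔ χ ∈ U)} with hMdef
  have hMmeager : IsMeagre M := by
    rw [IsMeagre]
    refine Filter.mem_of_superset hUeq ?_
    intro χ hχ
    simp only [hMdef, Set.mem_compl_iff, Set.mem_setOf_eq, not_not]
    exact iff_of_eq hχ
  -- the key step
  have key : ∀ l : List Bool, cylL l ⊆ U →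
      badSet f ∩ cylL l ⊆ M ∪ (flipSel l.length ⁻¹' M) ∪ Zbad := by
    intro l hlU χ ⟨⟨hVχ, hCP⟩, hcyl⟩
    set k := l.length with hk
    by_cases h1 : χ ∈ M
    · exact Or.inl (Or.inl h1)
    by_cases h2 : flipSel k χ ∈ M
    · exact Or.inl (Or.inr h2)
    right
    -- the flipped oracle is still in the cylinder, hence in U, hence in V
    have hflipcyl : flipSel k χ ∈ cylL l := by
      intro i hi
      have hfix : flipSel k χ i = χ i := by
        rw [flipSel, if_neg]
        rintro ⟨h3, h4⟩
        omega
      rw [hfix]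
      exact hcyl i hi
    have hVflip : flipSel k χ ∈ Vset f := by
      have hU' : flipSel k χ ∈ U := hlU hflipcyl
      by_contra hV'
      exact h2 (by simp only [hMdef, Set.mem_setOf_eq]; tauto)
    obtain ⟨htot, hcorr⟩ := hVflip
    -- on blocks ≥ k, the agreement set is the coin-flip set
    have claim : ∀ n, k ≤ n → (((χ (3*n+1) == χ (3*n+2)) = true) ↔ Ep f χ k n) := by
      intro n hn
      have hb3 : flipSel k χ (3*n) = !(χ (3*n)) := by
        rw [flipSel, if_pos]
        constructor <;> omega
      have hb4 : flipSel k χ (3*n+1) = χ (3*n+1) := by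
        rw [flipSel, if_neg]; rintro ⟨h3, -⟩; omega
      have hb5 : flipSel k χ (3*n+2) = χ (3*n+2) := by
        rw [flipSel, if_neg]; rintro ⟨h3, -⟩; omega
      have hBflip : Bfun (flipSel k χ) n = cond (!(χ (3*n))) (χ (3*n+1)) (χ (3*n+2)) := by
        rw [Bfun, hb3, hb4, hb5]
      have hEiff : Ep f χ k n ↔ Bfun (flipSel k χ) n = Bfun χ n := by
        constructor
        · rintro ⟨b, hb, hbB⟩
          have hbe : b = Bfun (flipSel k χ) n := hcorr n b hb
          have : b = true ↔ Bfun χ n = true := hbB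
          rw [hbe] at this
          exact (bool_iff_eq.mp this).symm
        · intro h
          obtain ⟨b, hb⟩ := htot n
          refine ⟨b, hb, ?_⟩
          have hbe : b = Bfun (flipSel k χ) n := hcorr n b hb
          rw [hbe, h]
          exact Iff.rfl
      rw [hEiff, hBflip, Bfun]
      cases hs : χ (3*n) <;> simp [hs] <;> 
        cases h1 : χ (3*n+1) <;> cases h2 : χ (3*n+2) <;> simp [eq_comm]
    -- hence χ lies in the bad coin set
    refine Set.mem_biUnion (show Ep f χ k ∈ CompPreds from hCP k) ?_
    refine Set.mem_iUnion.mpr ⟨k, ?_⟩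
    intro n hn
    exact (claim n hn).trans Iff.rfl
  -- covering of the bad set
  have cover : badSet f ⊆ M ∪ ⋃ l : List Bool,
      (if cylL l ⊆ U then badSet f ∩ cylL l else ∅) := by
    intro χ hχ
    by_cases h1 : χ ∈ M
    · exact Or.inl h1
    · right
      have hχU : χ ∈ U := by
        have : (χ ∈ Vset f) ↔ χ ∈ U := not_not.mp (by simpa [hMdef] using h1)
        exact this.mp hχ.1
      obtain ⟨m, hm⟩ := exists_cylPre_subset hUo hχU
      refine Set.mem_iUnion.mpr ⟨(List.range m).map χ, ?_⟩
      rw [if_pos (by rw [cylL_prefix]; exact hm)]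
      exact ⟨hχ, by rw [cylL_prefix]; intro i hi; rfl⟩
  refine IsMeagre.mono cover ?_
  refine isMeagre_union hMmeager (isMeagre_iUnion' fun l => ?_)
  split_ifs with h
  · exact IsMeagre.mono
      (key l h)
      (isMeagre_union (isMeagre_union hMmeager (isMeagre_preimage_flip _ hMmeager)) meager_Zbad)
  · exact IsMeagre.empty

/-! ### The explicit 3-query decoding functional -/

def sb (k : ℕ) : Bool := decide (k % 8 / 4 = 1)
def ub (k : ℕ) : Bool := decide (k % 8 / 2 % 2 = 1)
def vb (k : ℕ) : Bool := decide (k % 2 = 1)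

def axs0 : ℕ → Option (FinInfo × ℕ × Bool) := fun k =>
  some ([(3*(k/8), sb k), (3*(k/8)+1, ub k), (3*(k/8)+2, vb k)], k/8,
    cond (sb k) (ub k) (vb k))

lemma axs0_computable : Computable axs0 := by
  have hdiv8 : Primrec fun k : ℕ => k / 8 := Primrec.nat_div.comp Primrec.id (Primrec.const 8)
  have hmod8 : Primrec fun k : ℕ => k % 8 := Primrec.nat_mod.comp Primrec.id (Primrec.const 8)
  have hsb : Primrec sb := PrimrecPred.decide (Primrec.eq.comp
    (Primrec.nat_div.comp hmod8 (Primrec.const 4)) (Primrec.const 1))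
  have hub : Primrec ub := PrimrecPred.decide (Primrec.eq.comp
    (Primrec.nat_mod.comp (Primrec.nat_div.comp hmod8 (Primrec.const 2)) (Primrec.const 2))
    (Primrec.const 1))
  have hvb : Primrec vb := PrimrecPred.decide (Primrec.eq.comp
    (Primrec.nat_mod.comp Primrec.id (Primrec.const 2)) (Primrec.const 1))
  have hp0 : Primrec fun k : ℕ => 3*(k/8) :=
    Primrec.nat_mul.comp (Primrec.const 3) hdiv8
  have hp1 : Primrec fun k : ℕ => 3*(k/8)+1 :=
    Primrec.nat_add.comp hp0 (Primrec.const 1)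
  have hp2 : Primrec fun k : ℕ => 3*(k/8)+2 :=
    Primrec.nat_add.comp hp0 (Primrec.const 2)
  have hlist : Primrec fun k : ℕ =>
      ([(3*(k/8), sb k), (3*(k/8)+1, ub k), (3*(k/8)+2, vb k)] : FinInfo) :=
    Primrec.list_cons.comp (hp0.pair hsb)
      (Primrec.list_cons.comp (hp1.pair hub)
        (Primrec.list_cons.comp (hp2.pair hvb) (Primrec.const [])))
  have hcond : Primrec fun k : ℕ => cond (sb k) (ub k) (vb k) := Primrec.cond hsb hub hvb
  have hmain : Primrec fun k : ℕ =>
      (([(3*(k/8), sb k), (3*(k/8)+1, ub k), (3*(k/8)+2, vb k)] : FinInfo), k/8,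
        cond (sb k) (ub k) (vb k)) :=
    hlist.pair (hdiv8.pair hcond)
  exact (Primrec.option_some.comp hmain).to_comp

lemma axs0_eval (n : ℕ) (s u v : Bool) :
    axs0 (8*n + (4*s.toNat + 2*u.toNat + v.toNat))
      = some ([(3*n, s), (3*n+1, u), (3*n+2, v)], n, cond s u v) := by
  have hc : 4*s.toNat + 2*u.toNat + v.toNat < 8 := by cases s <;> cases u <;> cases v <;> simp
  set c := 4*s.toNat + 2*u.toNat + v.toNat with hcdef
  have h1 : (8*n+c)/8 = n := by omega
  have h2 : (8*n+c)%8 = c := by omega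
  have h3 : (8*n+c)%2 = c%2 := by omega
  unfold axs0 sb ub vb
  rw [h1, h2, h3]
  cases s <;> cases u <;> cases v <;> simp [hcdef]

lemma bool_eq_of_iff {a b : Bool} {p : Prop} (ha : a = true ↔ p) (hb : b = true ↔ p) : a = b :=
  (bool_iff_eq.mp (ha.trans hb.symm)).symm

lemma axs0_consistent : ∀ k₁ k₂ σ₁ σ₂ n b₁ b₂, axs0 k₁ = some (σ₁, n, b₁) →
    axs0 k₂ = some (σ₂, n, b₂) → σ₁.Compatible σ₂ → b₁ = b₂ := by
  intro k₁ k₂ σ₁ σ₂ n b₁ b₂ h₁ h₂ hcomp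
  simp only [axs0, Option.some.injEq, Prod.mk.injEq] at h₁ h₂
  obtain ⟨hσ₁, hn₁, hb₁⟩ := h₁
  obtain ⟨hσ₂, hn₂, hb₂⟩ := h₂
  have hs : sb k₁ = sb k₂ := by
    refine hcomp (3*(k₁/8), sb k₁) (by rw [← hσ₁]; simp) (3*(k₂/8), sb k₂)
      (by rw [← hσ₂]; simp) ?_
    simp [hn₁, hn₂]
  have hu : ub k₁ = ub k₂ := by
    refine hcomp (3*(k₁/8)+1, ub k₁) (by rw [← hσ₁]; simp) (3*(k₂/8)+1, ub k₂)
      (by rw [← hσ₂]; simp) ?_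
    simp [hn₁, hn₂]
  have hv : vb k₁ = vb k₂ := by
    refine hcomp (3*(k₁/8)+2, vb k₁) (by rw [← hσ₁]; simp) (3*(k₂/8)+2, vb k₂)
      (by rw [← hσ₂]; simp) ?_
    simp [hn₁, hn₂]
  rw [← hb₁, ← hb₂, hs, hu, hv]

def Phi0 : TuringFunctional := ⟨axs0, axs0_computable, axs0_consistent⟩

lemma exists_bool_iff (p : Prop) : ∃ b : Bool, b = true ↔ p := by
  classical
  exact ⟨decide p, decide_eq_true_iff⟩

lemma halts0 {C : Set ℕ} {n : ℕ} {s u v : Bool} (hs : s = true ↔ 3*n ∈ C)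
    (hu : u = true ↔ 3*n+1 ∈ C) (hv : v = true ↔ 3*n+2 ∈ C) :
    HaltsF axs0 C n (cond s u v) := by
  refine ⟨8*n + (4*s.toNat + 2*u.toNat + v.toNat), [(3*n, s), (3*n+1, u), (3*n+2, v)],
    axs0_eval n s u v, ?_⟩
  intro p hp
  simp only [List.mem_cons, List.not_mem_nil, or_false] at hp
  rcases hp with rfl | rfl | rfl
  · exact hs
  · exact hu
  · exact hv

lemma halts0_val {C : Set ℕ} {n : ℕ} {b : Bool} (h : HaltsF axs0 C n b)
    {s u v : Bool} (hs : s = true ↔ 3*n ∈ C) (hu : u = true ↔ 3*n+1 ∈ C)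
    (hv : v = true ↔ 3*n+2 ∈ C) : b = cond s u v := by
  obtain ⟨k, σ, hk, hag⟩ := h
  simp only [axs0, Option.some.injEq, Prod.mk.injEq] at hk
  obtain ⟨hσ, hn, hb⟩ := hk
  subst hn
  have h1 : sb k = true ↔ 3*(k/8) ∈ C := hag (3*(k/8), sb k) (by rw [← hσ]; simp)
  have h2 : ub k = true ↔ 3*(k/8)+1 ∈ C := hag (3*(k/8)+1, ub k) (by rw [← hσ]; simp)
  have h3 : vb k = true ↔ 3*(k/8)+2 ∈ C := hag (3*(k/8)+2, vb k) (by rw [← hσ]; simp)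
  rw [← hb, bool_eq_of_iff h1 hs, bool_eq_of_iff h2 hu, bool_eq_of_iff h3 hv]

lemma phi0_total (C : Set ℕ) : Phi0.TotalOn C := by
  intro n
  obtain ⟨s, hs⟩ := exists_bool_iff (3*n ∈ C)
  obtain ⟨u, hu⟩ := exists_bool_iff (3*n+1 ∈ C)
  obtain ⟨v, hv⟩ := exists_bool_iff (3*n+2 ∈ C)
  exact ⟨cond s u v, halts0 hs hu hv⟩

lemma phi0_funEq (χ : XS) : Phi0.FunEq (Aset χ) (Bset χ) := by
  refine ⟨phi0_total _, fun n b hb => ?_⟩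
  have hval : b = cond (χ (3*n)) (χ (3*n+1)) (χ (3*n+2)) :=
    halts0_val hb Iff.rfl Iff.rfl Iff.rfl
  show b = true ↔ Bfun χ n = true
  rw [hval, Bfun]

theorem modFin (χ : XS) : ModFinRed (Bset χ) (Aset χ) := by
  refine ⟨Phi0, phi0_funEq χ, fun C hC => ⟨phi0_total C, ?_⟩⟩
  have hsub : (Phi0.AgreeSet C (Bset χ))ᶜ ⊆ (fun m => m / 3) '' {n | ¬(n ∈ C ↔ n ∈ Aset χ)} := by
    intro n hn
    by_cases h0 : (3*n ∈ C ↔ 3*n ∈ Aset χ)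
    on_goal 2 => exact ⟨3*n, h0, (by omega : (3*n)/3 = n)⟩
    by_cases h1 : (3*n+1 ∈ C ↔ 3*n+1 ∈ Aset χ)
    on_goal 2 => exact ⟨3*n+1, h1, (by omega : (3*n+1)/3 = n)⟩
    by_cases h2 : (3*n+2 ∈ C ↔ 3*n+2 ∈ Aset χ)
    on_goal 2 => exact ⟨3*n+2, h2, (by omega : (3*n+2)/3 = n)⟩
    exfalso
    apply hn
    have hs : χ (3*n) = true ↔ 3*n ∈ C := (Iff.rfl.trans h0.symm)
    have hu : χ (3*n+1) = true ↔ 3*n+1 ∈ C := (Iff.rfl.trans h1.symm)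
    have hv : χ (3*n+2) = true ↔ 3*n+2 ∈ C := (Iff.rfl.trans h2.symm)
    exact ⟨Bfun χ n, by rw [Bfun]; exact halts0 hs hu hv, Iff.rfl⟩
  exact (hC.image _).subset hsub

/-! ### Final assembly -/

lemma flip_agree_computable (χ : XS) (k : ℕ) :
    ComputablePred fun n => (n ∈ Aset (flipSel k χ) ↔ n ∈ Aset χ) := by
  have heq : (fun n => (n ∈ Aset (flipSel k χ) ↔ n ∈ Aset χ))
      = fun n => ¬(n % 3 = 0 ∧ k ≤ n / 3) := by
    funext n
    apply propext
    show (flipSel k χ n = true ↔ χ n = true) ↔ _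
    by_cases h : n % 3 = 0 ∧ k ≤ n / 3
    · rw [flipSel]
      simp only [if_pos h]
      cases χ n <;> simp [h]
    · rw [flipSel]
      simp only [if_neg h]
      simp [h]
  rw [heq]
  rw [ComputablePred.computable_iff]
  refine ⟨fun n => !(decide (n % 3 = 0) && decide (k ≤ n / 3)), ?_, ?_⟩
  · have hA : Primrec fun n : ℕ => decide (n % 3 = 0) :=
      PrimrecPred.decide (Primrec.eq.comp (Primrec.nat_mod.comp Primrec.id (Primrec.const 3)) (Primrec.const 0))
    have hB : Primrec fun n : ℕ => decide (k ≤ n / 3) :=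
      PrimrecPred.decide (Primrec.nat_le.comp (Primrec.const k) (Primrec.nat_div.comp Primrec.id (Primrec.const 3)))
    have hAnd : Primrec fun n : ℕ => (decide (n % 3 = 0) && decide (k ≤ n / 3)) :=
      (Primrec.cond hA hB (Primrec.const false)).of_eq fun n => by
        cases decide (n % 3 = 0) <;> rfl
    exact ((Primrec.cond hAnd (Primrec.const false) (Primrec.const true)).of_eq fun n => by
      cases (decide (n % 3 = 0) && decide (k ≤ n / 3)) <;> rfl).to_comp
  · funext n
    apply propext
    by_cases hA : n % 3 = 0 <;> by_cases hB : k ≤ n / 3 <;> simp [hA, hB]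

theorem exists_good : ∃ χ : XS, (∀ f ∈ CompFuns, χ ∉ badSet f) := by
  haveI : Countable CompFuns := countable_CompFuns.to_subtype
  have hmeag : IsMeagre (⋃ f : CompFuns, badSet f) :=
    isMeagre_iUnion' fun f => meager_badSet f
  have hdense : Dense (⋃ f : CompFuns, badSet (f : ℕ → Option (FinInfo × ℕ × Bool)))ᶜ :=
    dense_of_mem_residual hmeag
  obtain ⟨χ, hχ⟩ := hdense.nonempty
  refine ⟨χ, fun f hf hbad => ?_⟩
  exact hχ (Set.mem_iUnion.mpr ⟨⟨f, hf⟩, hbad⟩)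

theorem main_result : ∃ A B : Set ℕ, ModFinRed B A ∧ ¬ ModRecRed B A := by
  obtain ⟨χ, hχ⟩ := exists_good
  refine ⟨Aset χ, Bset χ, modFin χ, ?_⟩
  rintro ⟨Φ, hFun, hRob⟩
  apply hχ Φ.axs Φ.axs_computable
  constructor
  · -- χ ∈ Vset Φ.axs
    refine ⟨hFun.1, fun n b hb => ?_⟩
    have := hFun.2 n b hb
    exact (bool_iff_eq.mp this).symm
  · intro k
    obtain ⟨-, hCP⟩ := hRob (Aset (flipSel k χ)) (flip_agree_computable χ k)
    exact hCP

end MFMR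

theorem exists_mod_finite_red_not_mod_recursive_red :
    ∃ A B : Set ℕ, ModFinRed B A ∧ ¬ ModRecRed B A := MFMR.main_result
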